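/- If X is compact and Y is discrete, and the exponential Y^X exists in the category of topological spaces, then Y^X is discrete. -/

import Mathlib

universe u

theorem stmt9 {X Y : Type u} [TopologicalSpace X] [TopologicalSpace Y]
    [CompactSpace X] [DiscreteTopology Y]
    [τ : TopologicalSpace C(X, Y)]
    (hev : Continuous fun p : C(X, Y) × X => p.1 p.2)
    (htr : ∀ (Z : Type u) [TopologicalSpace Z] (g : Z → C(X, Y)),
      Continuous (fun p : Z × X => g p.1 p.2) → Continuous g) :
    DiscreteTopology C(X, Y) := by
  refine discreteTopology_iff_isOpen_singleton.mpr fun f => ?_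
  have hdiag : IsOpen {p : Y × Y | p.1 = p.2} := isOpen_discrete _
  have hcont : Continuous fun p : C(X, Y) × X => ((p.1 p.2 : Y), f p.2) :=
    hev.prodMk (f.continuous.comp continuous_snd)
  have hW : IsOpen {p : C(X, Y) × X | p.1 p.2 = f p.2} := hdiag.preimage hcont
  obtain ⟨u, v, hu, _, hfu, hXv, huv⟩ :=
    generalized_tube_lemma isCompact_singleton isCompact_univ hW
      (by rintro ⟨g, x⟩ ⟨hg, -⟩; simp only [Set.mem_singleton_iff] at hg; subst hg; rfl)
  have hsub : u ⊆ {f} := fun g hg =>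
    ContinuousMap.ext fun x => huv (show (g, x) ∈ u ×ˢ v from ⟨hg, hXv (Set.mem_univ x)⟩)
  have : ({f} : Set C(X, Y)) = u :=
    Set.Subset.antisymm hfu hsub
  rw [this]; exact hu
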